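/- arXiv:2504.00633 — 8 statements merged into one kernel-verified Lean document; each statement's English description precedes it below -/
import Mathlib

section
/- If S is a subterminal scheme and U is an affine open subset of S, then the ring of sections Γ(S, U) of the structure sheaf of S over U is a solid ring. -/
open AlgebraicGeometry CategoryTheory

/-- If `S` is a subterminal scheme and `U` is an affine open subset of `S`, then the ring
of sections of the structure sheaf of `S` over `U` is a solid ring: for every commutative
ring `A` there is at most one ring homomorphism from it to `A`. -/
theorem sections_isSolid_of_isSubterminal (S : Scheme) (hS : IsSubterminal S)
    (U : S.Opens) (hU : IsAffineOpen U) :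
    ∀ A : CommRingCat, Subsingleton ((S.presheaf.obj (Opposite.op U) : CommRingCat) →+* A) := by
  intro A
  set R := (S.presheaf.obj (Opposite.op U) : CommRingCat) with hR
  -- In the same universe as `S`, any two ring homs out of `R` agree, by subterminality.
  have key : ∀ (B : CommRingCat) (f g : R ⟶ B), f = g := by
    intro B f g
    have h : Spec.map f ≫ hU.fromSpec = Spec.map g ≫ hU.fromSpec := hS _ _
    exact Spec.map_injective ((cancel_mono _).mp h)
  -- Hence `x ⊗ₜ 1 = 1 ⊗ₜ x` in `R ⊗[ℤ] R`.
  have tensor_eq : ∀ x : R, (x ⊗ₜ[ℤ] (1 : R) : TensorProduct ℤ R R) = (1 : R) ⊗ₜ[ℤ] x := by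
    intro x
    have h := key (CommRingCat.of (TensorProduct ℤ R R))
      (CommRingCat.ofHom Algebra.TensorProduct.includeLeftRingHom)
      (CommRingCat.ofHom (Algebra.TensorProduct.includeRight (R := ℤ) (A := R)
        (B := R)).toRingHom)
    exact congrArg (fun φ => φ x) h
  constructor
  intro f g
  have hcomm : ∀ (x y : R), Commute (f.toIntAlgHom x) (g.toIntAlgHom y) := fun _ _ =>
    Commute.all _ _
  set φ : TensorProduct ℤ R R →ₐ[ℤ] A :=
    Algebra.TensorProduct.lift f.toIntAlgHom g.toIntAlgHom hcomm with hφ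
  ext x
  have h1 : φ (x ⊗ₜ[ℤ] 1) = f x := by
    simp [hφ, Algebra.TensorProduct.lift_tmul]
  have h2 : φ (1 ⊗ₜ[ℤ] x) = g x := by
    simp [hφ, Algebra.TensorProduct.lift_tmul]
  calc f x = φ (x ⊗ₜ[ℤ] 1) := h1.symm
    _ = φ (1 ⊗ₜ[ℤ] x) := by rw [tensor_eq x]
    _ = g x := h2
end

section
/- Let n ≥ 2 be an integer and let J be a set of prime numbers containing every prime factor of n. Then the product ring ℤ[J⁻¹] × ℤ/nℤ is a solid ring; that is, for every commutative ring A there is at most one ring homomorphism ℤ[J⁻¹] × ℤ/nℤ → A. -/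
/-- Let `n ≥ 2` be an integer and let `J` be a set of prime numbers containing every prime
factor of `n`. Then the product ring `ℤ[J⁻¹] × ℤ/nℤ` is a solid ring: for every commutative
ring `A` there is at most one ring homomorphism `ℤ[J⁻¹] × ℤ/nℤ →+* A`. -/
theorem localization_prod_zmod_isSolid (n : ℕ) (hn : 2 ≤ n)
    (J : Set ℕ) (hJ : ∀ p ∈ J, Nat.Prime p)
    (hfac : ∀ p : ℕ, p.Prime → p ∣ n → p ∈ J) :
    ∀ (A : Type*) [CommRing A],
      Subsingleton
        ((Localization (Submonoid.closure ((fun p : ℕ => (p : ℤ)) '' J)) × ZMod n) →+* A) := by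
  intro A _
  haveI : NeZero n := ⟨by omega⟩
  set M : Submonoid ℤ := Submonoid.closure ((fun p : ℕ => (p : ℤ)) '' J) with hM
  -- every positive divisor of n lies in M
  have key : ∀ m : ℕ, 0 < m → m ∣ n → ((m : ℤ) ∈ M) := by
    intro m
    induction m using Nat.strong_induction_on with
    | _ m ih =>
      intro hm hdvd
      rcases eq_or_ne m 1 with rfl | hm1
      · simpa using one_mem M
      · have hp : m.minFac.Prime := Nat.minFac_prime hm1
        have hpJ : m.minFac ∈ J := hfac _ hp ((Nat.minFac_dvd m).trans hdvd)
        have hdvd' : m / m.minFac ∣ n := (Nat.div_dvd_of_dvd (Nat.minFac_dvd m)).trans hdvd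
        have hlt : m / m.minFac < m := Nat.div_lt_self hm hp.one_lt
        have hpos : 0 < m / m.minFac :=
          Nat.div_pos (Nat.minFac_le hm) hp.pos
        have hcast : (m : ℤ) = (m.minFac : ℤ) * ((m / m.minFac : ℕ) : ℤ) := by
          rw [← Nat.cast_mul, Nat.mul_div_cancel' (Nat.minFac_dvd m)]
        rw [hcast]
        exact mul_mem (Submonoid.subset_closure ⟨_, hpJ, rfl⟩) (ih _ hlt hpos hdvd')
  have hnM : ((n : ℤ)) ∈ M := key n (by omega) dvd_rfl
  set Loc := Localization M with hLoc
  -- the inverse of n in Loc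
  set t : Loc := Localization.mk 1 ⟨(n : ℤ), hnM⟩ with ht
  have hnt : (n : Loc) * t = 1 := by
    rw [ht, ← Localization.mk_natCast (M := M) n, Localization.mk_mul, mul_one, one_mul]
    exact Localization.mk_self ⟨(n : ℤ), hnM⟩
  constructor
  intro g h
  set e : Loc × ZMod n := (1, 0) with he
  have hee : e * e = e := by
    simp [he, Prod.ext_iff]
  have hte : (n : Loc × ZMod n) * (t, 0) = e := by
    ext
    · simpa using hnt
    · simp [he]
  have hne : (n : Loc × ZMod n) * (1 - e) = 0 := by
    ext
    · simp [he]
    · simp [he, ZMod.natCast_self]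
  set a : A := g e with ha
  set b : A := h e with hb
  have hga : (n : A) * g (t, 0) = a := by
    have := congrArg g hte
    rwa [map_mul, map_natCast] at this
  have hhb : (n : A) * h (t, 0) = b := by
    have := congrArg h hte
    rwa [map_mul, map_natCast] at this
  have hgb : (n : A) * (1 - b) = 0 := by
    have := congrArg h hne
    rwa [map_mul, map_natCast, map_sub, map_one, map_zero] at this
  have hha : (n : A) * (1 - a) = 0 := by
    have := congrArg g hne
    rwa [map_mul, map_natCast, map_sub, map_one, map_zero] at this
  have hab : a = b := by
    have h1 : a * (1 - b) = 0 := by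
      calc a * (1 - b) = g (t, 0) * ((n : A) * (1 - b)) := by rw [← hga]; ring
        _ = 0 := by rw [hgb, mul_zero]
    have h2 : b * (1 - a) = 0 := by
      calc b * (1 - a) = h (t, 0) * ((n : A) * (1 - a)) := by rw [← hhb]; ring
        _ = 0 := by rw [hha, mul_zero]
    have h1' : a = a * b := by linear_combination h1
    have h2' : b = a * b := by linear_combination h2
    exact h1'.trans h2'.symm
  -- agreement on the ZMod part
  have hzmod : ∀ k : ZMod n, g (0, k) = h (0, k) := by
    intro k
    have hk : ((0 : Loc), k) = k.val • ((1 : Loc × ZMod n) - e) := by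
      ext
      · simp [he]
      · simp [he, ZMod.natCast_rightInverse k]
    rw [hk, map_nsmul, map_nsmul, map_sub, map_sub, map_one, map_one, ← ha, ← hb, hab]
  -- agreement on the localization part
  have hloc : ∀ y : Loc, g (y, (0 : ZMod n)) = h (y, (0 : ZMod n)) := by
    intro y
    induction y using Localization.induction_on with
    | H p =>
      obtain ⟨z, s⟩ := p
      set w : Loc := Localization.mk 1 s with hw
      set y : Loc := Localization.mk z s with hy
      have hys : (y, (0 : ZMod n)) * (((s : ℤ) : Loc), ((s : ℤ) : ZMod n)) =
          (((z : ℤ) : Loc), ((z : ℤ) : ZMod n)) * e := by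
        ext
        · show y * ((s : ℤ) : Loc) = ((z : ℤ) : Loc) * 1
          rw [mul_one, hy, ← Localization.mk_intCast (M := M) (s : ℤ),
            ← Localization.mk_intCast (M := M) z]
          calc Localization.mk z s * Localization.mk ((s : ℤ)) 1
              = Localization.mk (z * (s : ℤ)) s := by rw [Localization.mk_mul, mul_one]
            _ = Localization.mk z 1 * Localization.mk ((s : ℤ)) s := by
                rw [Localization.mk_mul, one_mul]
            _ = Localization.mk z 1 := by rw [Localization.mk_self, mul_one]
        · simp [he]
      have hws : (w, (0 : ZMod n)) * (((s : ℤ) : Loc), ((s : ℤ) : ZMod n)) = e := by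
        ext
        · show w * ((s : ℤ) : Loc) = (1 : Loc)
          rw [hw, ← Localization.mk_intCast (M := M) (s : ℤ), Localization.mk_mul, one_mul,
            mul_one]
          exact Localization.mk_self s
        · simp [he]
      have hsc : (((s : ℤ) : Loc), ((s : ℤ) : ZMod n)) = (((s : ℤ)) : Loc × ZMod n) := rfl
      have hzc : (((z : ℤ) : Loc), ((z : ℤ) : ZMod n)) = (((z : ℤ)) : Loc × ZMod n) := rfl
      rw [hsc] at hys hws
      rw [hzc] at hys
      have G1 : g (y, (0 : ZMod n)) * (((s : ℤ)) : A) = (((z : ℤ)) : A) * a := by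
        have := congrArg g hys
        rwa [map_mul, map_mul, map_intCast, map_intCast] at this
      have H1 : h (y, (0 : ZMod n)) * (((s : ℤ)) : A) = (((z : ℤ)) : A) * a := by
        have := congrArg h hys
        rwa [map_mul, map_mul, map_intCast, map_intCast, ← hb, ← hab] at this
      have G2 : g (w, (0 : ZMod n)) * (((s : ℤ)) : A) = a := by
        have := congrArg g hws
        rwa [map_mul, map_intCast] at this
      have H2 : h (w, (0 : ZMod n)) * (((s : ℤ)) : A) = a := by
        have := congrArg h hws
        rwa [map_mul, map_intCast, ← hb, ← hab] at this
      have hye : (y, (0 : ZMod n)) * e = (y, (0 : ZMod n)) := by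
        ext <;> simp [he]
      have Ge : g (y, (0 : ZMod n)) * a = g (y, (0 : ZMod n)) := by
        have := congrArg g hye; rwa [map_mul] at this
      have He : h (y, (0 : ZMod n)) * a = h (y, (0 : ZMod n)) := by
        have := congrArg h hye; rwa [map_mul, ← hb, ← hab] at this
      calc g (y, (0 : ZMod n)) = g (y, (0 : ZMod n)) * a := Ge.symm
        _ = g (y, (0 : ZMod n)) * (h (w, (0 : ZMod n)) * (((s : ℤ)) : A)) := by rw [H2]
        _ = (g (y, (0 : ZMod n)) * (((s : ℤ)) : A)) * h (w, (0 : ZMod n)) := by ring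
        _ = (((z : ℤ)) : A) * a * h (w, (0 : ZMod n)) := by rw [G1]
        _ = (((z : ℤ)) : A) * (g (w, (0 : ZMod n)) * (((s : ℤ)) : A)) * h (w, (0 : ZMod n)) := by
            rw [G2]
        _ = (((z : ℤ)) : A) * (h (w, (0 : ZMod n)) * (((s : ℤ)) : A)) * g (w, (0 : ZMod n)) := by
            ring
        _ = (((z : ℤ)) : A) * a * g (w, (0 : ZMod n)) := by rw [H2]
        _ = (h (y, (0 : ZMod n)) * (((s : ℤ)) : A)) * g (w, (0 : ZMod n)) := by rw [H1]
        _ = h (y, (0 : ZMod n)) * (g (w, (0 : ZMod n)) * (((s : ℤ)) : A)) := by ring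
        _ = h (y, (0 : ZMod n)) * a := by rw [G2]
        _ = h (y, (0 : ZMod n)) := He
  refine RingHom.ext fun x => ?_
  have hx : x = (x.1, (0 : ZMod n)) + ((0 : Loc), x.2) := by
    ext <;> simp
  rw [hx, map_add, map_add, hloc x.1, hzmod x.2]
end

section
/- Let S be a subterminal scheme and let x be a point of S. Then the stalk of the structure sheaf of S at x is isomorphic, as a commutative ring, to one of the following: the field ℚ, the localization ℤ_(p) of ℤ at a prime ideal (p) for some prime p, or the cyclic ring ℤ/pⁿℤ for some prime p and positive integer n. -/
open AlgebraicGeometry CategoryTheory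

/-- The ideal `(p) ⊆ ℤ` generated by a prime number `p` is a prime ideal. -/
theorem spanIntPrime (p : ℕ) (hp : p.Prime) : (Ideal.span {(p : ℤ)}).IsPrime :=
  (Ideal.span_singleton_prime (by exact_mod_cast hp.ne_zero)).mpr
    (Nat.prime_iff_prime_int.mp hp)

/-- `ℤ_(p)`, the localization of `ℤ` at the prime ideal `(p)`. -/
abbrev ZLocAtPrime (p : ℕ) (hp : p.Prime) : Type :=
  @Localization.AtPrime ℤ _ (Ideal.span {(p : ℤ)}) (spanIntPrime p hp)

open TensorProduct

universe u


lemma surjective_algebraMap_of_tensor {K : Type*} [Field K] {B : Type*} [CommRing B]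
    [Nontrivial B] [Algebra K B]
    (h : ∀ y : B, y ⊗ₜ[K] (1:B) = (1:B) ⊗ₜ[K] y) :
    Function.Surjective (algebraMap K B) := by
  classical
  let b := Module.Basis.ofVectorSpace K B
  have hc : b.repr 1 ≠ 0 := by simp
  obtain ⟨j0, hj0⟩ := Finsupp.ne_iff.mp hc
  simp only [Finsupp.coe_zero, Pi.zero_apply] at hj0
  intro x
  refine ⟨b.repr x j0 / b.repr 1 j0, ?_⟩
  have key : ∀ i : _, b.repr x i * b.repr 1 j0 = b.repr 1 i * b.repr x j0 := by
    intro i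
    have := congrArg (fun z => (b.tensorProduct b).repr z (i, j0)) (h x)
    simpa [Module.Basis.tensorProduct_repr_tmul_apply, smul_eq_mul, mul_comm] using this
  have hx : x = (b.repr x j0 / b.repr 1 j0) • (1 : B) := by
    apply b.repr.injective
    ext i
    rw [map_smul, Finsupp.smul_apply, smul_eq_mul]
    field_simp
    rw [key i]
    ring
  rw [Algebra.algebraMap_eq_smul_one]
  exact hx.symm




section helpers

/-- From the "at most one hom" property we get `r ⊗ 1 = 1 ⊗ r`. -/
lemma tmul_comm_of_P {R : Type u} [CommRing R] (A : Type*) [CommRing A] [Algebra A R]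
    (P : ∀ (T : Type u) [CommRing T] (f g : R →+* T), f = g) (r : R) :
    r ⊗ₜ[A] (1 : R) = (1 : R) ⊗ₜ[A] r := by
  have h := P (TensorProduct A R R) Algebra.TensorProduct.includeLeftRingHom
    Algebra.TensorProduct.includeRight.toRingHom
  exact RingHom.congr_fun h r

/-- all primes invertible implies all nonzero naturals invertible -/
lemma natUnit {R : Type*} [CommRing R] (h : ∀ q : ℕ, q.Prime → IsUnit ((q : ℕ) : R)) :
    ∀ n : ℕ, n ≠ 0 → IsUnit ((n : ℕ) : R) := by
  intro n
  induction n using Nat.strong_induction_on with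
  | _ n ih =>
    intro hn
    rcases eq_or_ne n 1 with rfl | h1
    · simp
    have h2 : 2 ≤ n := by omega
    have hq := Nat.minFac_prime h1
    have hd : n = n.minFac * (n / n.minFac) := (Nat.mul_div_cancel' n.minFac_dvd).symm
    have hlt : n / n.minFac < n := Nat.div_lt_self (by omega) hq.two_le
    have hne : n / n.minFac ≠ 0 := by
      intro h0
      rw [h0, Nat.mul_zero] at hd; omega
    have := (h _ hq).mul (ih _ hlt hne)
    rw [← Nat.cast_mul, ← hd] at this
    exact this

lemma intUnit {R : Type*} [CommRing R] (h : ∀ q : ℕ, q.Prime → IsUnit ((q : ℕ) : R)) :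
    ∀ z : ℤ, z ≠ 0 → IsUnit ((z : ℤ) : R) := by
  intro z hz
  have := natUnit h z.natAbs (Int.natAbs_ne_zero.mpr hz)
  rcases Int.natAbs_eq z with he | he
  · rw [he, Int.cast_natCast]
    exact this
  · rw [he, Int.cast_neg, Int.cast_natCast]
    exact this.neg

/-- integers not divisible by a non-invertible prime are invertible in a local ring -/
lemma unit_of_not_dvd {R : Type*} [CommRing R] [IsLocalRing R] {p : ℕ} (hp : p.Prime)
    (hpu : ¬ IsUnit ((p : ℕ) : R)) {z : ℤ} (hz : ¬ ((p : ℤ) ∣ z)) : IsUnit ((z : ℤ) : R) := by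
  have hco : IsCoprime (p : ℤ) z := (Nat.prime_iff_prime_int.mp hp).coprime_iff_not_dvd.mpr hz
  obtain ⟨a, b, hab⟩ := hco
  by_contra h
  have hzm : (z : R) ∈ IsLocalRing.maximalIdeal R := h
  have hpm : ((p : ℕ) : R) ∈ IsLocalRing.maximalIdeal R := hpu
  have h1 : (1 : R) ∈ IsLocalRing.maximalIdeal R := by
    have := (IsLocalRing.maximalIdeal R).add_mem
      (Ideal.mul_mem_left _ (a : R) (by exact_mod_cast hpm))
      (Ideal.mul_mem_left _ (b : R) hzm)
    have hcast : ((a * p + b * z : ℤ) : R) = (1 : R) := by rw [hab]; push_cast; ring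
    rw [← hcast]; push_cast; convert this using 2
  exact (IsLocalRing.maximalIdeal R).ne_top_iff_one.mp
    (Ideal.IsMaximal.ne_top (IsLocalRing.maximalIdeal.isMaximal R)) h1

end helpers




lemma stalk_hom_ext (S : Scheme.{u}) (hS : IsSubterminal S) (x : S)
    (T : Type u) [CommRing T] (f g : S.presheaf.stalk x →+* T) : f = g := by
  obtain ⟨U, hU, hxU⟩ : ∃ U : S.Opens, IsAffineOpen U ∧ x ∈ U :=
    ⟨_, isAffineOpen_opensRange (S.affineOpenCover.f _), S.affineOpenCover.covers x⟩
  let f' : S.presheaf.stalk x ⟶ CommRingCat.of T := CommRingCat.ofHom f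
  let g' : S.presheaf.stalk x ⟶ CommRingCat.of T := CommRingCat.ofHom g
  have h1 : Spec.map f' ≫ hU.fromSpecStalk hxU = Spec.map g' ≫ hU.fromSpecStalk hxU := hS _ _
  rw [IsAffineOpen.fromSpecStalk, ← Category.assoc, ← Category.assoc,
    ← Spec.map_comp, ← Spec.map_comp, cancel_mono] at h1
  have h3 : f.comp (S.presheaf.germ U x hxU).hom = g.comp (S.presheaf.germ U x hxU).hom :=
    congrArg CommRingCat.Hom.hom (Spec.map_injective h1)
  letI := S.presheaf.algebra_section_stalk (⟨x, hxU⟩ : U)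
  haveI := hU.isLocalization_stalk ⟨x, hxU⟩
  exact IsLocalization.ringHom_ext ((hU.primeIdealOf ⟨x,hxU⟩).asIdeal.primeCompl) h3

lemma rat_bijective {R : Type u} [CommRing R] [Nontrivial R]
    (P : ∀ (T : Type u) [CommRing T] (f g : R →+* T), f = g)
    (h : ∀ q : ℕ, q.Prime → IsUnit ((q : ℕ) : R)) :
    ∃ φ : ℚ →+* R, Function.Bijective φ := by
  have hg : ∀ y : nonZeroDivisors ℤ, IsUnit (Int.castRingHom R y) := fun y =>
    intUnit h y (nonZeroDivisors.ne_zero y.2)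
  let φ : ℚ →+* R := IsLocalization.lift (M := nonZeroDivisors ℤ) (S := ℚ) hg
  letI : Algebra ℚ R := φ.toAlgebra
  have hsurj : Function.Surjective (algebraMap ℚ R) :=
    surjective_algebraMap_of_tensor (K := ℚ) (B := R) (fun y => tmul_comm_of_P ℚ P y)
  exact ⟨φ, φ.injective, hsurj⟩

theorem classify (R : Type u) [CommRing R] [IsLocalRing R]
    (P : ∀ (T : Type u) [CommRing T] (f g : R →+* T), f = g) :
    Nonempty (R ≃+* ℚ) ∨
    (∃ (p : ℕ) (hp : p.Prime), Nonempty (R ≃+* ZLocAtPrime p hp)) ∨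
    (∃ (p n : ℕ), p.Prime ∧ 0 < n ∧ Nonempty (R ≃+* ZMod (p ^ n))) := by
  by_cases hall : ∀ q : ℕ, q.Prime → IsUnit ((q : ℕ) : R)
  · left
    obtain ⟨φ, hφ⟩ := rat_bijective P hall
    exact ⟨(RingEquiv.ofBijective φ hφ).symm⟩
  push_neg at hall
  obtain ⟨p, hp, hpu⟩ := hall
  haveI := Fact.mk hp
  -- Step: every element is an integer plus a multiple of p
  have hstep : ∀ r : R, ∃ (z : ℤ) (s : R), r = (z : R) + (p : R) * s := by
    set I : Ideal R := Ideal.span {((p : ℕ) : R)} with hI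
    have hIne : I ≠ ⊤ := by
      rw [hI, Ne, Ideal.span_singleton_eq_top]
      exact hpu
    haveI : Nontrivial (R ⧸ I) := Ideal.Quotient.nontrivial_iff.mpr hIne
    haveI : CharP (R ⧸ I) p := by
      rw [CharP.charP_iff_prime_eq_zero hp]
      have : ((p : ℕ) : R) ∈ I := Ideal.subset_span rfl
      rw [show ((p : ℕ) : R ⧸ I) = Ideal.Quotient.mk I ((p : ℕ) : R) by push_cast; rfl]
      exact (Ideal.Quotient.eq_zero_iff_mem).mpr this
    letI : Algebra (ZMod p) (R ⧸ I) := ZMod.algebra _ p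
    have PQ : ∀ (T : Type u) [CommRing T] (f g : (R ⧸ I) →+* T), f = g := by
      intro T _ f g
      have := P T (f.comp (Ideal.Quotient.mk I)) (g.comp (Ideal.Quotient.mk I))
      exact (RingHom.cancel_right Ideal.Quotient.mk_surjective).mp this
    have hsurj : Function.Surjective (algebraMap (ZMod p) (R ⧸ I)) :=
      surjective_algebraMap_of_tensor (fun y => tmul_comm_of_P (ZMod p) PQ y)
    intro r
    obtain ⟨k, hk⟩ := hsurj (Ideal.Quotient.mk I r)
    have hk2 : Ideal.Quotient.mk I r = Ideal.Quotient.mk I ((k.val : ℤ) : R) := by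
      rw [← hk]
      have : algebraMap (ZMod p) (R ⧸ I) ((k.val : ℕ) : ZMod p) = ((k.val : ℕ) : R ⧸ I) :=
        map_natCast _ _
      rw [ZMod.natCast_val, ZMod.cast_id] at this
      rw [this]; push_cast; rfl
    have hmem : r - ((k.val : ℤ) : R) ∈ I := Ideal.Quotient.eq.mp hk2
    obtain ⟨s, hs⟩ := Ideal.mem_span_singleton'.mp hmem
    exact ⟨(k.val : ℤ), s, by linear_combination -hs⟩
  have hpow : ∀ (k : ℕ) (r : R), ∃ (z : ℤ) (s : R), r = (z : R) + ((p : ℕ) : R) ^ k * s := by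
    intro k
    induction k with
    | zero => intro r; exact ⟨0, r, by simp⟩
    | succ k ih =>
      intro r
      obtain ⟨z, s, hzs⟩ := ih r
      obtain ⟨z', s', hzs'⟩ := hstep s
      refine ⟨z + (p : ℕ) ^ k * z', s', ?_⟩
      rw [hzs, hzs']
      push_cast
      ring
  by_cases hnil : ∃ k : ℕ, ((p : ℕ) : R) ^ k = 0
  · obtain ⟨k, hk⟩ := hnil
    have hsurjInt : ∀ r : R, ∃ z : ℤ, (z : R) = r := by
      intro r
      obtain ⟨z, s, hzs⟩ := hpow k r
      exact ⟨z, by rw [hzs, hk, zero_mul, add_zero]⟩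
    set c := ringChar R with hc
    have hcd : c ∣ p ^ k := by
      have h0 : ((p ^ k : ℕ) : R) = 0 := by push_cast; exact hk
      exact (CharP.cast_eq_zero_iff R c (p ^ k)).mp h0
    obtain ⟨m, hmk, hcm⟩ := (Nat.dvd_prime_pow hp).mp hcd
    have hm1 : 0 < m := by
      rcases Nat.eq_zero_or_pos m with h0 | h0
      · exfalso
        have h1 : ((c : ℕ) : R) = 0 := CharP.cast_eq_zero R c
        rw [hcm, h0, pow_zero, Nat.cast_one] at h1
        exact one_ne_zero h1
      · exact h0
    haveI : CharP R (p ^ m) := hcm ▸ ringChar.charP R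
    have hinj : Function.Injective (ZMod.castHom (dvd_refl (p ^ m)) R) :=
      ZMod.castHom_injective R
    have hsurj2 : Function.Surjective (ZMod.castHom (dvd_refl (p ^ m)) R) := by
      intro r
      obtain ⟨z, hz⟩ := hsurjInt r
      exact ⟨(z : ZMod (p ^ m)), by rw [map_intCast]; exact hz⟩
    exact Or.inr (Or.inr ⟨p, m, hp, hm1, ⟨(RingEquiv.ofBijective _ ⟨hinj, hsurj2⟩).symm⟩⟩)
  -- p not nilpotent
  push_neg at hnil
  have hIntInj : ∀ z : ℤ, (z : R) = 0 → z = 0 := by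
    intro z hz
    by_contra h0
    have hn0 : z.natAbs ≠ 0 := Int.natAbs_ne_zero.mpr h0
    have hnR : ((z.natAbs : ℕ) : R) = 0 := by
      rcases Int.natAbs_eq z with he | he
      · rw [he, Int.cast_natCast] at hz; exact hz
      · rw [he, Int.cast_neg, Int.cast_natCast, neg_eq_zero] at hz; exact hz
    set a := z.natAbs.factorization p with ha
    set t := z.natAbs / p ^ a with ht
    have hfact : p ^ a * t = z.natAbs := Nat.ordProj_mul_ordCompl_eq_self z.natAbs p
    have hndvd : ¬ p ∣ t := Nat.not_dvd_ordCompl hp hn0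
    have htu : IsUnit ((t : ℕ) : R) := by
      have := unit_of_not_dvd hp hpu (z := (t : ℤ)) (by exact_mod_cast hndvd)
      rwa [Int.cast_natCast] at this
    have h0R : ((p : ℕ) : R) ^ a * ((t : ℕ) : R) = 0 := by
      have : ((p ^ a * t : ℕ) : R) = 0 := by rw [hfact]; exact hnR
      push_cast at this
      exact this
    obtain ⟨w, hw⟩ := htu.exists_right_inv
    apply hnil a
    calc ((p : ℕ) : R) ^ a = ((p : ℕ) : R) ^ a * (((t : ℕ) : R) * w) := by rw [hw, mul_one]
      _ = (((p : ℕ) : R) ^ a * ((t : ℕ) : R)) * w := by ring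
      _ = 0 := by rw [h0R, zero_mul]
  let K : Ideal R :=
    { carrier := {r : R | ∃ k : ℕ, ((p : ℕ) : R) ^ k * r = 0}
      add_mem' := by
        rintro a b ⟨k1, h1⟩ ⟨k2, h2⟩
        refine ⟨k1 + k2, ?_⟩
        have h3 : ((p:ℕ):R) ^ (k1+k2) * (a + b)
            = ((p:ℕ):R) ^ k2 * (((p:ℕ):R) ^ k1 * a) + ((p:ℕ):R) ^ k1 * (((p:ℕ):R) ^ k2 * b) := by
          ring
        rw [h3, h1, h2, mul_zero, mul_zero, add_zero]
      zero_mem' := ⟨0, by simp⟩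
      smul_mem' := by
        rintro c r ⟨k, hk⟩
        refine ⟨k, ?_⟩
        have h3 : ((p:ℕ):R) ^ k * (c • r) = c * (((p:ℕ):R) ^ k * r) := by
          rw [smul_eq_mul]; ring
        rw [h3, hk, mul_zero] }
  have hKmem : ∀ r : R, r ∈ K ↔ ∃ k : ℕ, ((p : ℕ) : R) ^ k * r = 0 := fun _ => Iff.rfl
  have hKne : K ≠ ⊤ := by
    intro h
    have h1 : (1 : R) ∈ K := h ▸ Submodule.mem_top
    obtain ⟨k, hk⟩ := h1
    rw [mul_one] at hk
    exact hnil k hk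
  haveI : Nontrivial (R ⧸ K) := Ideal.Quotient.nontrivial_iff.mpr hKne
  haveI : IsLocalRing (R ⧸ K) :=
    IsLocalRing.of_surjective' (Ideal.Quotient.mk K) Ideal.Quotient.mk_surjective
  have PQ : ∀ (T : Type u) [CommRing T] (f g : (R ⧸ K) →+* T), f = g := by
    intro T _ f g
    exact (RingHom.cancel_right Ideal.Quotient.mk_surjective).mp
      (P T (f.comp (Ideal.Quotient.mk K)) (g.comp (Ideal.Quotient.mk K)))
  have hinj' : ∀ z : ℤ, (z : R ⧸ K) = 0 → z = 0 := by
    intro z hz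
    have h1 : Ideal.Quotient.mk K ((z : ℤ) : R) = 0 := by rw [map_intCast]; exact hz
    obtain ⟨k, hk⟩ := (hKmem _).mp (Ideal.Quotient.eq_zero_iff_mem.mp h1)
    have h2 : (((p : ℤ) ^ k * z : ℤ) : R) = 0 := by push_cast; exact hk
    have h3 := hIntInj _ h2
    have hpk : (p : ℤ) ^ k ≠ 0 := pow_ne_zero _ (by exact_mod_cast hp.ne_zero)
    exact (mul_eq_zero.mp h3).resolve_left hpk
  have htf : ∀ (k : ℕ) (y : R ⧸ K), ((p : ℕ) : R ⧸ K) ^ k * y = 0 → y = 0 := by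
    intro k y hy
    obtain ⟨r, rfl⟩ := Ideal.Quotient.mk_surjective y
    have h1 : Ideal.Quotient.mk K (((p : ℕ) : R) ^ k * r) = 0 := by
      rw [map_mul, map_pow, map_natCast]; exact hy
    obtain ⟨j, hj⟩ := (hKmem _).mp (Ideal.Quotient.eq_zero_iff_mem.mp h1)
    exact Ideal.Quotient.eq_zero_iff_mem.mpr
      ((hKmem _).mpr ⟨j + k, by rw [pow_add, mul_assoc]; exact hj⟩)
  have hpu' : ¬ IsUnit ((p : ℕ) : R ⧸ K) := by
    intro hu
    obtain ⟨y, hy⟩ := hu.exists_right_inv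
    obtain ⟨s, rfl⟩ := Ideal.Quotient.mk_surjective y
    have h1 : Ideal.Quotient.mk K (((p : ℕ) : R) * s - 1) = 0 := by
      rw [map_sub, map_mul, map_natCast, map_one, hy, sub_self]
    obtain ⟨k, hk⟩ := (hKmem _).mp (Ideal.Quotient.eq_zero_iff_mem.mp h1)
    have hKnon : (1 : R) - ((p : ℕ) : R) * s ∈ K := ⟨k, by linear_combination -hk⟩
    have h2 : ¬ IsUnit ((1 : R) - ((p : ℕ) : R) * s) := by
      intro hu1
      obtain ⟨j, hj⟩ := hKnon
      obtain ⟨w, hw⟩ := hu1.exists_right_inv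
      apply hnil j
      calc ((p : ℕ) : R) ^ j
          = ((p : ℕ) : R) ^ j * (((1 : R) - ((p : ℕ) : R) * s) * w) := by rw [hw, mul_one]
        _ = (((p : ℕ) : R) ^ j * ((1 : R) - ((p : ℕ) : R) * s)) * w := by ring
        _ = 0 := by rw [hj, zero_mul]
    have h3 : ¬ IsUnit (((p : ℕ) : R) * s) := fun hu2 => hpu (isUnit_of_mul_isUnit_left hu2)
    have hm1 : ((1 : R) - ((p : ℕ) : R) * s) ∈ IsLocalRing.maximalIdeal R := h2
    have hm2 : ((p : ℕ) : R) * s ∈ IsLocalRing.maximalIdeal R := h3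
    have hm : (1 : R) ∈ IsLocalRing.maximalIdeal R := by
      have := (IsLocalRing.maximalIdeal R).add_mem hm1 hm2
      simpa using this
    exact (IsLocalRing.maximalIdeal R).ne_top_iff_one.mp
      (Ideal.IsMaximal.ne_top (IsLocalRing.maximalIdeal.isMaximal R)) hm
  -- localization away from p
  let L := Localization.Away ((p : ℕ) : R ⧸ K)
  have hle : Submonoid.powers ((p : ℕ) : R ⧸ K) ≤ nonZeroDivisors (R ⧸ K) := by
    rintro w ⟨k, rfl⟩
    rw [mem_nonZeroDivisors_iff]
    exact ⟨fun y hy => htf k y hy, fun y hy => htf k y (by rw [mul_comm]; exact hy)⟩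
  have hτinj : Function.Injective (algebraMap (R ⧸ K) L) := IsLocalization.injective L hle
  haveI : Nontrivial L :=
    ⟨1, 0, fun h => one_ne_zero (hτinj (by rw [map_one, map_zero]; exact h))⟩
  have PL : ∀ (T : Type u) [CommRing T] (f g : L →+* T), f = g := by
    intro T _ f g
    exact IsLocalization.ringHom_ext (Submonoid.powers ((p : ℕ) : R ⧸ K))
      (PQ T (f.comp (algebraMap (R ⧸ K) L)) (g.comp (algebraMap (R ⧸ K) L)))
  have hallL : ∀ q : ℕ, q.Prime → IsUnit ((q : ℕ) : L) := by
    intro q hq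
    by_cases hqp : q = p
    · subst hqp
      have := IsLocalization.map_units L
        (⟨((q : ℕ) : R ⧸ K), Submonoid.mem_powers _⟩ : Submonoid.powers ((q : ℕ) : R ⧸ K))
      rwa [map_natCast] at this
    · have hdvd : ¬ ((p : ℤ) ∣ (q : ℤ)) := by
        rw [Int.natCast_dvd_natCast]
        intro hd
        exact hqp ((Nat.prime_dvd_prime_iff_eq hp hq).mp hd).symm
      have h1 := (unit_of_not_dvd hp hpu' hdvd).map (algebraMap (R ⧸ K) L)
      rw [Int.cast_natCast, map_natCast] at h1
      exact h1
  obtain ⟨φ, hφ⟩ := rat_bijective PL hallL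
  haveI : (Ideal.span {(p : ℤ)}).IsPrime := spanIntPrime p hp
  have hg' : ∀ y : (Ideal.span {(p : ℤ)}).primeCompl, IsUnit (Int.castRingHom (R ⧸ K) y) := by
    rintro ⟨y, hy⟩
    have hnd : ¬ ((p : ℤ) ∣ y) := fun hd => hy (Ideal.mem_span_singleton.mpr hd)
    exact unit_of_not_dvd hp hpu' hnd
  let ψ' : ZLocAtPrime p hp →+* R ⧸ K :=
    IsLocalization.lift (M := (Ideal.span {(p : ℤ)}).primeCompl) hg'
  have hψ's : Function.Surjective ψ' := by
    intro r
    obtain ⟨q, hq⟩ := hφ.2 (algebraMap (R ⧸ K) L r)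
    have hrel : r * ((q.den : ℤ) : R ⧸ K) = ((q.num : ℤ) : R ⧸ K) := by
      apply hτinj
      rw [map_mul, map_intCast, map_intCast]
      have h1 : φ ((q.den : ℤ) : ℚ) = ((q.den : ℤ) : L) := map_intCast φ _
      have h2 : φ ((q.num : ℤ) : ℚ) = ((q.num : ℤ) : L) := map_intCast φ _
      rw [← h1, ← h2, ← hq, ← map_mul]
      congr 1
      have hd0 : ((q.den : ℚ)) ≠ 0 := Nat.cast_ne_zero.mpr q.den_ne_zero
      push_cast
      exact ((div_eq_iff hd0).mp (Rat.num_div_den q)).symm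
    by_cases hd : (p : ℤ) ∣ (q.den : ℤ)
    · exfalso
      have hdn : p ∣ q.den := Int.natCast_dvd_natCast.mp hd
      have hnumdvd : ¬ ((p : ℤ) ∣ q.num) := by
        intro hnd
        have h1 : p ∣ q.num.natAbs := Int.natCast_dvd.mp hnd
        have h2 := Nat.dvd_gcd h1 hdn
        rw [Nat.Coprime.gcd_eq_one q.reduced] at h2
        exact hp.one_lt.ne' (Nat.dvd_one.mp h2)
      have hnum : IsUnit ((q.num : ℤ) : R ⧸ K) := unit_of_not_dvd hp hpu' hnumdvd
      obtain ⟨w, hw⟩ := hnum.exists_right_inv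
      obtain ⟨e, he⟩ := hdn
      apply hpu'
      apply IsUnit.of_mul_eq_one (((e : ℕ) : R ⧸ K) * r * w)
      calc ((p : ℕ) : R ⧸ K) * (((e : ℕ) : R ⧸ K) * r * w)
          = (r * ((q.den : ℤ) : R ⧸ K)) * w := by
            rw [show ((q.den : ℤ) : R ⧸ K) = (((p * e : ℕ) : ℤ) : R ⧸ K) by rw [← he]]
            push_cast
            ring
        _ = 1 := by rw [hrel, hw]
    · have hden : ((q.den : ℤ)) ∈ (Ideal.span {(p : ℤ)}).primeCompl := fun hmem =>
        hd (Ideal.mem_span_singleton.mp hmem)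
      refine ⟨IsLocalization.mk' _ q.num
        (⟨(q.den : ℤ), hden⟩ : (Ideal.span {(p : ℤ)}).primeCompl), ?_⟩
      rw [IsLocalization.lift_mk'_spec]
      show ((q.num : ℤ) : R ⧸ K) = ((q.den : ℤ) : R ⧸ K) * r
      rw [← hrel]; ring
  have hψ'i : Function.Injective ψ' := by
    rw [injective_iff_map_eq_zero]
    intro u hu
    obtain ⟨⟨a, s⟩, rfl⟩ := IsLocalization.mk'_surjective (Ideal.span {(p : ℤ)}).primeCompl u
    rw [IsLocalization.lift_mk'_spec] at hu
    have ha : ((a : ℤ) : R ⧸ K) = 0 := by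
      have : Int.castRingHom (R ⧸ K) a = Int.castRingHom (R ⧸ K) s * 0 := hu
      simpa using this
    have := hinj' a ha
    subst this
    exact IsLocalization.mk'_zero _
  let e' : ZLocAtPrime p hp ≃+* R ⧸ K := RingEquiv.ofBijective ψ' ⟨hψ'i, hψ's⟩
  have hgR : ∀ y : (Ideal.span {(p : ℤ)}).primeCompl, IsUnit (Int.castRingHom R y) := by
    rintro ⟨y, hy⟩
    exact unit_of_not_dvd hp hpu (fun hd => hy (Ideal.mem_span_singleton.mpr hd))
  let ψ : ZLocAtPrime p hp →+* R :=
    IsLocalization.lift (M := (Ideal.span {(p : ℤ)}).primeCompl) hgR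
  have hπ := P R (ψ.comp (((e'.symm : R ⧸ K ≃+* ZLocAtPrime p hp) : (R ⧸ K) →+* ZLocAtPrime p hp).comp
    (Ideal.Quotient.mk K))) (RingHom.id R)
  have hmkinj : Function.Injective (Ideal.Quotient.mk K) := by
    rw [injective_iff_map_eq_zero]
    intro r hr
    have h1 := RingHom.congr_fun hπ r
    simp only [RingHom.comp_apply, RingHom.id_apply] at h1
    rw [hr, map_zero, map_zero] at h1
    exact h1.symm
  exact Or.inr (Or.inl ⟨p, hp,
    ⟨(RingEquiv.ofBijective (Ideal.Quotient.mk K)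
      ⟨hmkinj, Ideal.Quotient.mk_surjective⟩).trans e'.symm⟩⟩)


/-- Let `S` be a subterminal scheme and `x` a point of `S`.  Then the stalk of the structure
sheaf of `S` at `x` is isomorphic, as a commutative ring, to `ℚ`, to `ℤ_(p)` for some prime
`p`, or to `ℤ/pⁿℤ` for some prime `p` and positive integer `n`. -/
theorem stalk_of_isSubterminal (S : Scheme) (hS : IsSubterminal S) (x : S) :
    Nonempty ((S.presheaf.stalk x : CommRingCat) ≃+* ℚ) ∨
    (∃ (p : ℕ) (hp : p.Prime),
      Nonempty ((S.presheaf.stalk x : CommRingCat) ≃+* ZLocAtPrime p hp)) ∨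
    (∃ (p n : ℕ), p.Prime ∧ 0 < n ∧
      Nonempty ((S.presheaf.stalk x : CommRingCat) ≃+* ZMod (p ^ n))) := by
  exact classify _ (fun T _ f g => stalk_hom_ext S hS x T f g)
end

section
/- Let S be a subterminal scheme and let p be a prime number. Then there is at most one point x of S whose stalk is isomorphic, as a commutative ring, to ℤ_(p) or to ℤ/pⁿℤ for some positive integer n. -/
open AlgebraicGeometry CategoryTheory

abbrev pCompl (p : ℕ) (hp : p.Prime) : Submonoid ℤ :=
  @Ideal.primeCompl ℤ _ (Ideal.span {(p : ℤ)}) (spanIntPrime p hp)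

/-- A ring hom from a local ring killing nonunits is a local hom. -/
theorem isLocalHom_of_nonunit_zero {A B : Type*} [CommRing A] [CommRing B] [Nontrivial B]
    (f : A →+* B) (h : ∀ a : A, ¬IsUnit a → f a = 0) : IsLocalHom f := by
  constructor
  intro a ha
  by_contra h'
  rw [h a h'] at ha
  exact not_isUnit_zero ha

/-- the key geometric lemma -/
theorem point_eq_of_localHoms (S : Scheme) (hS : IsSubterminal S) {R : CommRingCat}
    [IsLocalRing R] {x y : S} (f : S.presheaf.stalk x ⟶ R) (g : S.presheaf.stalk y ⟶ R)
    [IsLocalHom f.hom] [IsLocalHom g.hom] : x = y := by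
  have h := hS (Spec.map f ≫ S.fromSpecStalk x) (Spec.map g ≫ S.fromSpecStalk y)
  have hx := congrArg (fun φ : Spec R ⟶ S => φ.base (IsLocalRing.closedPoint R)) h
  exact (Scheme.fromSpecStalk_closedPoint (x := x)).symm.trans
    ((congrArg (S.fromSpecStalk x) (Spec_closedPoint (f := f)).symm).trans
    ((Scheme.Hom.comp_apply _ _ _).symm.trans (hx.trans ((Scheme.Hom.comp_apply _ _ _).trans
    ((congrArg (S.fromSpecStalk y) (Spec_closedPoint (f := g))).trans
    Scheme.fromSpecStalk_closedPoint)))))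

theorem zloc_unit_aux (p : ℕ) (hp : p.Prime) :
    ∀ s : pCompl p hp, IsUnit ((Int.castRingHom (ZMod p)) s) := by
  haveI := Fact.mk hp
  intro s
  have hs : ¬ (p : ℤ) ∣ (s : ℤ) := fun h =>
    s.2 (Ideal.mem_span_singleton.mpr h)
  simpa [isUnit_iff_ne_zero, ZMod.intCast_zmod_eq_zero_iff_dvd] using hs

/-- the map `ℤ_(p) → ZMod p`. -/
noncomputable def zlocToZMod (p : ℕ) (hp : p.Prime) : ZLocAtPrime p hp →+* ZMod p :=
  haveI := spanIntPrime p hp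
  IsLocalization.lift (M := pCompl p hp) (zloc_unit_aux p hp)

theorem zlocToZMod_nonunit (p : ℕ) (hp : p.Prime) (b : ZLocAtPrime p hp)
    (hb : ¬IsUnit b) : zlocToZMod p hp b = 0 := by
  haveI := Fact.mk hp
  haveI := spanIntPrime p hp
  obtain ⟨r, s, rfl⟩ : ∃ (r : ℤ) (s : pCompl p hp), IsLocalization.mk' _ r s = b := by
    haveI := spanIntPrime p hp
    obtain ⟨⟨r, s⟩, h⟩ := IsLocalization.mk'_surjective (pCompl p hp) b
    exact ⟨r, s, h⟩
  have hr : r ∈ Ideal.span {(p : ℤ)} := by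
    by_contra hr
    exact hb ((IsLocalization.AtPrime.isUnit_mk'_iff _ _ r s).mpr hr)
  rw [Ideal.mem_span_singleton] at hr
  rw [zlocToZMod, IsLocalization.lift_mk'_spec]
  simp only [eq_intCast, mul_zero, ZMod.intCast_zmod_eq_zero_iff_dvd]
  exact_mod_cast hr

theorem zmodPow_nonunit (p n : ℕ) (hp : p.Prime) (hn : 0 < n) (b : ZMod (p ^ n))
    (hb : ¬IsUnit b) : ZMod.castHom (dvd_pow_self p hn.ne') (ZMod p) b = 0 := by
  haveI : NeZero (p ^ n) := ⟨pow_ne_zero n hp.ne_zero⟩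
  have hv : ¬ (b.val).Coprime (p ^ n) := by
    intro h
    refine hb ?_
    have := (ZMod.isUnit_iff_coprime b.val (p ^ n)).mpr h
    rwa [ZMod.natCast_val, ZMod.cast_id] at this
  have hdvd : p ∣ b.val := by
    by_contra hd
    exact hv (Nat.Coprime.pow_right n ((hp.coprime_iff_not_dvd.mpr hd).symm))
  rw [ZMod.castHom_apply, ← ZMod.natCast_val, ZMod.natCast_eq_zero_iff]
  exact hdvd

theorem exists_localHom (S : Scheme) (p : ℕ) (hp : p.Prime) (x : S)
    (hx : Nonempty ((S.presheaf.stalk x : CommRingCat) ≃+* ZLocAtPrime p hp) ∨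
      ∃ n : ℕ, 0 < n ∧ Nonempty ((S.presheaf.stalk x : CommRingCat) ≃+* ZMod (p ^ n))) :
    ∃ f : (S.presheaf.stalk x : CommRingCat) →+* ZMod p, IsLocalHom f := by
  haveI := Fact.mk hp
  rcases hx with ⟨⟨e⟩⟩ | ⟨n, hn, ⟨e⟩⟩
  · refine ⟨(zlocToZMod p hp).comp e.toRingHom, isLocalHom_of_nonunit_zero _ ?_⟩
    intro a ha
    have hea : ¬IsUnit (e a) := fun h => ha (by simpa using h.map e.symm.toRingHom)
    simp [RingHom.comp_apply, zlocToZMod_nonunit p hp _ hea]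
  · refine ⟨(ZMod.castHom (dvd_pow_self p hn.ne') (ZMod p)).comp e.toRingHom,
      isLocalHom_of_nonunit_zero _ ?_⟩
    intro a ha
    have hea : ¬IsUnit (e a) := fun h => ha (by simpa using h.map e.symm.toRingHom)
    simp [RingHom.comp_apply, zmodPow_nonunit p n hp hn _ hea]

/-- Let `S` be a subterminal scheme and `p` a prime number.  Then there is at most one point
`x` of `S` whose stalk is isomorphic to `ℤ_(p)` or to `ℤ/pⁿℤ` for some positive integer `n`. -/
theorem atMostOne_point_stalk_at_prime (S : Scheme) (hS : IsSubterminal S)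
    (p : ℕ) (hp : p.Prime) (x y : S)
    (hx : Nonempty ((S.presheaf.stalk x : CommRingCat) ≃+* ZLocAtPrime p hp) ∨
      ∃ n : ℕ, 0 < n ∧ Nonempty ((S.presheaf.stalk x : CommRingCat) ≃+* ZMod (p ^ n)))
    (hy : Nonempty ((S.presheaf.stalk y : CommRingCat) ≃+* ZLocAtPrime p hp) ∨
      ∃ n : ℕ, 0 < n ∧ Nonempty ((S.presheaf.stalk y : CommRingCat) ≃+* ZMod (p ^ n))) :
    x = y := by
  haveI := Fact.mk hp
  obtain ⟨f, hf⟩ := exists_localHom S p hp x hx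
  obtain ⟨g, hg⟩ := exists_localHom S p hp y hy
  haveI : IsLocalRing (ULift (ZMod p)) := (ULift.ringEquiv (R := ZMod p)).symm.isLocalRing
  haveI : IsLocalHom (ULift.ringEquiv (R := ZMod p)).symm.toRingHom :=
    ⟨fun a h => by simpa using h.map (ULift.ringEquiv (R := ZMod p)).toRingHom⟩
  let f' := (ULift.ringEquiv (R := ZMod p)).symm.toRingHom.comp f
  let g' := (ULift.ringEquiv (R := ZMod p)).symm.toRingHom.comp g
  haveI : IsLocalHom f' := RingHom.isLocalHom_comp _ _
  haveI : IsLocalHom g' := RingHom.isLocalHom_comp _ _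
  haveI : IsLocalRing ↑(CommRingCat.of (ULift.{_, 0} (ZMod p))) :=
    (ULift.ringEquiv (R := ZMod p)).symm.isLocalRing
  exact point_eq_of_localHoms S hS (R := CommRingCat.of (ULift (ZMod p))) (CommRingCat.ofHom f') (CommRingCat.ofHom g')
end

section
/- Let S be a subterminal scheme. Then there is at most one point of S whose stalk is isomorphic, as a commutative ring, to the field ℚ. -/
open AlgebraicGeometry CategoryTheory IsLocalRing

/-- Let `S` be a subterminal scheme.  Then there is at most one point of `S` whose stalk is
isomorphic, as a commutative ring, to the field `ℚ`. -/
theorem atMostOne_point_stalk_rat (S : Scheme) (hS : IsSubterminal S) (x y : S)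
    (hx : Nonempty ((S.presheaf.stalk x : CommRingCat) ≃+* ℚ))
    (hy : Nonempty ((S.presheaf.stalk y : CommRingCat) ≃+* ℚ)) :
    x = y := by
  obtain ⟨ex'⟩ := hx
  obtain ⟨ey'⟩ := hy
  let ex := ex'.trans (ULift.ringEquiv (R := ℚ)).symm
  let ey := ey'.trans (ULift.ringEquiv (R := ℚ)).symm
  let fx : Spec (CommRingCat.of (ULift.{u_1} ℚ)) ⟶ S :=
    Spec.map (CommRingCat.ofHom ex.toRingHom) ≫ S.fromSpecStalk x
  let fy : Spec (CommRingCat.of (ULift.{u_1} ℚ)) ⟶ S :=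
    Spec.map (CommRingCat.ofHom ey.toRingHom) ≫ S.fromSpecStalk y
  have h := hS fx fy
  have hx' : fx.base (closedPoint (ULift.{u_1} ℚ)) = x := by
    have : IsLocalHom (CommRingCat.ofHom ex.toRingHom).hom := ⟨fun a ha => (isLocalHom_equiv ex).1 a ha⟩
    haveI : IsLocalRing ↑(CommRingCat.of (ULift.{u_1} ℚ)) := inferInstanceAs (IsLocalRing (ULift ℚ))
    haveI : IsLocalRing ↑(CommRingCat.of ↑(S.presheaf.stalk x)) := inferInstanceAs (IsLocalRing (S.presheaf.stalk x))
    simp only [fx, Scheme.Hom.comp_apply]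
    exact (congrArg (S.fromSpecStalk x) (Spec_closedPoint (f := CommRingCat.ofHom ex.toRingHom))).trans Scheme.fromSpecStalk_closedPoint
  have hy' : fy.base (closedPoint (ULift.{u_1} ℚ)) = y := by
    have : IsLocalHom (CommRingCat.ofHom ey.toRingHom).hom := ⟨fun a ha => (isLocalHom_equiv ey).1 a ha⟩
    haveI : IsLocalRing ↑(CommRingCat.of (ULift.{u_1} ℚ)) := inferInstanceAs (IsLocalRing (ULift ℚ))
    haveI : IsLocalRing ↑(CommRingCat.of ↑(S.presheaf.stalk y)) := inferInstanceAs (IsLocalRing (S.presheaf.stalk y))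
    simp only [fy, Scheme.Hom.comp_apply]
    exact (congrArg (S.fromSpecStalk y) (Spec_closedPoint (f := CommRingCat.ofHom ey.toRingHom))).trans Scheme.fromSpecStalk_closedPoint
  rw [← hx', ← hy', h]
end

section
/- Let S be a subterminal scheme. If there exists a point of S whose stalk is isomorphic, as a commutative ring, to ℤ_(p) for some prime p, then there exists a point of S whose stalk is isomorphic, as a commutative ring, to ℚ. -/
open AlgebraicGeometry CategoryTheory

/-- Let `S` be a subterminal scheme.  If some point of `S` has stalk isomorphic to `ℤ_(p)`
for some prime `p`, then some point of `S` has stalk isomorphic to `ℚ`. -/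
theorem exists_stalk_rat_of_exists_stalk_zloc (S : Scheme) (hS : IsSubterminal S)
    (h : ∃ (x : S) (p : ℕ) (hp : p.Prime),
      Nonempty ((S.presheaf.stalk x : CommRingCat) ≃+* ZLocAtPrime p hp)) :
    ∃ y : S, Nonempty ((S.presheaf.stalk y : CommRingCat) ≃+* ℚ) := by
  clear hS
  obtain ⟨x, p, hp, ⟨e⟩⟩ := h
  haveI := spanIntPrime p hp
  -- ℚ is the fraction field of ℤ_(p)
  letI : Algebra (ZLocAtPrime p hp) ℚ :=
    IsLocalization.localizationAlgebraOfSubmonoidLe _ _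
      (Ideal.span {(p:ℤ)}).primeCompl (nonZeroDivisors ℤ)
      (Ideal.span {(p:ℤ)}).primeCompl_le_nonZeroDivisors
  haveI := IsLocalization.localization_isScalarTower_of_submonoid_le
      (ZLocAtPrime p hp) ℚ (Ideal.span {(p:ℤ)}).primeCompl (nonZeroDivisors ℤ)
      (Ideal.span {(p:ℤ)}).primeCompl_le_nonZeroDivisors
  haveI : IsFractionRing (ZLocAtPrime p hp) ℚ :=
    IsFractionRing.isFractionRing_of_isDomain_of_isLocalization
      (Ideal.span {(p:ℤ)}).primeCompl _ _
  -- affine open around x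
  haveI : IsOpenImmersion (S.affineOpenCover.f (S.affineOpenCover.idx x)) :=
    S.affineOpenCover.map_prop _
  set U : S.Opens := (S.affineOpenCover.f (S.affineOpenCover.idx x)).opensRange with hUdef
  have hU : IsAffineOpen U := isAffineOpen_opensRange _
  have hxU : x ∈ U := S.affineOpenCover.covers x
  haveI : IsDomain (S.presheaf.stalk x) := MulEquiv.isDomain (ZLocAtPrime p hp) e.toMulEquiv
  letI : Algebra (S.presheaf.stalk x) ℚ :=
    ((algebraMap (ZLocAtPrime p hp) ℚ).comp e.toRingHom).toAlgebra
  letI : Algebra Γ(S, U) (S.presheaf.stalk x) := (S.presheaf.germ U x hxU).hom.toAlgebra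
  letI : Algebra Γ(S, U) ℚ :=
    ((algebraMap (S.presheaf.stalk x) ℚ).comp (algebraMap Γ(S, U) (S.presheaf.stalk x))).toAlgebra
  haveI : IsScalarTower Γ(S, U) (S.presheaf.stalk x) ℚ := IsScalarTower.of_algebraMap_eq' rfl
  haveI hloc : IsLocalization.AtPrime (S.presheaf.stalk x)
      (hU.primeIdealOf ⟨x, hxU⟩).asIdeal := hU.isLocalization_stalk ⟨x, hxU⟩
  haveI : (⊥ : Ideal (S.presheaf.stalk x)).IsPrime := Ideal.bot_prime
  have ψinj : Function.Injective (algebraMap (S.presheaf.stalk x) ℚ) :=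
    (IsFractionRing.injective (ZLocAtPrime p hp) ℚ).comp e.injective
  haveI : IsLocalization.AtPrime ℚ (⊥ : Ideal (S.presheaf.stalk x)) := by
    constructor
    constructor
    · rintro ⟨s, hs⟩
      refine isUnit_iff_ne_zero.mpr fun h0 => hs ?_
      exact Ideal.mem_bot.mpr (ψinj (h0.trans (map_zero _).symm))
    · intro z
      obtain ⟨⟨a, b⟩, hz⟩ := IsLocalization.surj (nonZeroDivisors (ZLocAtPrime p hp)) z
      refine ⟨⟨e.symm a, ⟨e.symm b.1, fun hmem => ?_⟩⟩, ?_⟩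
      · exact nonZeroDivisors.ne_zero b.2
          (by simpa using congrArg e (Ideal.mem_bot.mp hmem))
      · have h1 : algebraMap (S.presheaf.stalk x) ℚ (e.symm a)
            = algebraMap (ZLocAtPrime p hp) ℚ a := by
          show algebraMap (ZLocAtPrime p hp) ℚ (e (e.symm a)) = _
          rw [RingEquiv.apply_symm_apply]
        have h2 : algebraMap (S.presheaf.stalk x) ℚ (e.symm b.1)
            = algebraMap (ZLocAtPrime p hp) ℚ b.1 := by
          show algebraMap (ZLocAtPrime p hp) ℚ (e (e.symm b.1)) = _
          rw [RingEquiv.apply_symm_apply]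
        simpa [h1, h2] using hz
    · intro a b hab
      exact ⟨⟨1, fun h => one_ne_zero (Ideal.mem_bot.mp h)⟩, by simpa using ψinj hab⟩
  haveI hQ : IsLocalization.AtPrime ℚ
      (Ideal.comap (algebraMap Γ(S, U) (S.presheaf.stalk x))
        (⊥ : Ideal (S.presheaf.stalk x))) :=
    IsLocalization.isLocalization_isLocalization_atPrime_isLocalization
      (M := (hU.primeIdealOf ⟨x, hxU⟩).asIdeal.primeCompl) (T := ℚ) _
  haveI : (Ideal.comap (algebraMap Γ(S, U) (S.presheaf.stalk x))
      (⊥ : Ideal (S.presheaf.stalk x))).IsPrime := Ideal.IsPrime.comap _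
  set q : PrimeSpectrum Γ(S, U) :=
    ⟨Ideal.comap (algebraMap Γ(S, U) (S.presheaf.stalk x))
      (⊥ : Ideal (S.presheaf.stalk x)), inferInstance⟩ with hq
  set y : S := hU.fromSpec.base q with hy'
  have hy : y ∈ U := by
    have : y ∈ Set.range hU.fromSpec.base := Set.mem_range_self q
    rwa [hU.range_fromSpec] at this
  haveI hyloc := hU.isLocalization_stalk' q hy
  refine ⟨y, ⟨?_⟩⟩
  letI : Algebra Γ(S, U) (S.presheaf.stalk y) := (S.presheaf.germ U y hy).hom.toAlgebra
  haveI : IsLocalization.AtPrime (S.presheaf.stalk y) q.asIdeal := hyloc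
  exact (IsLocalization.algEquiv q.asIdeal.primeCompl (S.presheaf.stalk y) ℚ).toRingEquiv
end

section
/- Let S be a scheme such that: (i) every stalk of S is isomorphic, as a commutative ring, to ℚ, to ℤ_(p) for some prime p, or to ℤ/pⁿℤ for some prime p and positive integer n; (ii) there is at most one point of S whose stalk is isomorphic to ℚ; and (iii) for every prime p there is at most one point of S whose stalk is isomorphic to ℤ_(p) or to ℤ/pⁿℤ for some positive integer n. Then S is a subterminal object in the category of schemes. -/
open AlgebraicGeometry CategoryTheory

lemma isUnit_intCast_of_equiv {R S : Type*} [CommRing R] [CommRing S] (e : R ≃+* S) (n : ℤ) :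
    IsUnit ((n : R)) ↔ IsUnit ((n : S)) := by
  constructor
  · intro h; simpa [map_intCast] using h.map e
  · intro h; simpa [map_intCast] using h.map e.symm

lemma unit_rat (q : ℕ) (hq : q.Prime) : IsUnit (((q : ℤ) : ℚ)) :=
  isUnit_iff_ne_zero.mpr (by exact_mod_cast hq.ne_zero)

lemma unit_iff_loc (p : ℕ) (hp : p.Prime) (q : ℕ) (hq : q.Prime) :
    IsUnit (((q : ℤ) : ZLocAtPrime p hp)) ↔ q ≠ p := by
  haveI := spanIntPrime p hp
  have h := IsLocalization.AtPrime.isUnit_to_map_iff (ZLocAtPrime p hp)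
    (Ideal.span {(p : ℤ)}) (q : ℤ)
  rw [show (algebraMap ℤ (ZLocAtPrime p hp)) (q : ℤ) = ((q : ℤ) : ZLocAtPrime p hp) from
    map_intCast _ _] at h
  rw [h]
  have : ((q : ℤ) ∈ (Ideal.span {(p : ℤ)}).primeCompl) ↔ ¬ ((q:ℤ) ∈ Ideal.span {(p : ℤ)}) :=
    Iff.rfl
  rw [this, Ideal.mem_span_singleton, Int.natCast_dvd_natCast,
    Nat.prime_dvd_prime_iff_eq hp hq]
  exact not_iff_not.mpr eq_comm

lemma unit_iff_zmod (p n q : ℕ) (hp : p.Prime) (hn : 0 < n) (hq : q.Prime) :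
    IsUnit (((q : ℤ) : ZMod (p ^ n))) ↔ q ≠ p := by
  haveI : NeZero (p ^ n) := ⟨pow_ne_zero n hp.ne_zero⟩
  have h1 : (((q : ℤ)) : ZMod (p ^ n)) = ((q : ℕ) : ZMod (p ^ n)) := by push_cast; ring
  rw [h1, ZMod.isUnit_iff_coprime]
  constructor
  · rintro h rfl
    have hd : q ∣ q ^ n := dvd_pow_self q hn.ne'
    rw [Nat.Coprime, Nat.gcd_eq_left hd] at h
    exact hp.one_lt.ne' h
  · intro h
    exact Nat.Coprime.pow_right n ((Nat.coprime_primes hq hp).mpr h)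

/-- Every element is an integer divided by an integer that is a unit. -/
def IntFrac (R : Type*) [CommRing R] : Prop :=
  ∀ r : R, ∃ a b : ℤ, IsUnit ((b : R)) ∧ r * (b : R) = (a : R)

lemma intFrac_rat : IntFrac ℚ := by
  intro r
  refine ⟨r.num, (r.den : ℤ), isUnit_iff_ne_zero.mpr (by exact_mod_cast r.den_nz), ?_⟩
  have hd : ((r.den : ℚ)) ≠ 0 := by exact_mod_cast r.den_nz
  push_cast
  calc r * (r.den : ℚ) = (r.num / r.den) * r.den := by rw [Rat.num_div_den]
    _ = r.num := div_mul_cancel₀ _ hd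

lemma intFrac_loc (p : ℕ) (hp : p.Prime) : IntFrac (ZLocAtPrime p hp) := by
  intro r
  haveI := spanIntPrime p hp
  obtain ⟨⟨a, b⟩, h⟩ := IsLocalization.surj (Ideal.span {(p : ℤ)}).primeCompl r
  refine ⟨a, b, ?_, ?_⟩
  · simpa using IsLocalization.map_units (ZLocAtPrime p hp) b
  · simpa using h

lemma intFrac_zmod (m : ℕ) : IntFrac (ZMod m) := by
  intro r
  exact ⟨(ZMod.cast r : ℤ), 1, by simp, by simp [ZMod.intCast_zmod_cast]⟩

lemma intFrac_of_equiv {R S : Type*} [CommRing R] [CommRing S] (e : R ≃+* S)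
    (h : IntFrac S) : IntFrac R := by
  intro r
  obtain ⟨a, b, hu, he⟩ := h (e r)
  refine ⟨a, b, (isUnit_intCast_of_equiv e b).mpr hu, ?_⟩
  apply e.injective
  rw [map_mul, map_intCast, map_intCast, he]

lemma isUnit_stalk_transfer {X Y : Scheme} (f : X ⟶ Y) (x : X) (n : ℤ) :
    IsUnit ((n : X.presheaf.stalk x)) ↔ IsUnit ((n : Y.presheaf.stalk (f.base x))) := by
  constructor
  · intro h
    exact isUnit_of_map_unit (f.stalkMap x).hom _ (by rwa [map_intCast])
  · intro h
    have := h.map (f.stalkMap x).hom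
    rwa [map_intCast] at this

lemma stalk_surj {X Y : Scheme} (f : X ⟶ Y) (x : X)
    (h : IntFrac (X.presheaf.stalk x)) : Function.Surjective (f.stalkMap x) := by
  intro r
  obtain ⟨a, b, hu, he⟩ := h r
  have hub : IsUnit ((b : Y.presheaf.stalk (f.base x))) :=
    (isUnit_stalk_transfer f x b).mp hu
  obtain ⟨u, hu'⟩ := hub
  refine ⟨(a : Y.presheaf.stalk (f.base x)) * ↑u⁻¹, ?_⟩
  rw [map_mul, map_intCast]
  calc (a : X.presheaf.stalk x) * (f.stalkMap x) ↑u⁻¹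
      = r * ((b : X.presheaf.stalk x) * (f.stalkMap x) ↑u⁻¹) := by rw [← he]; ring
    _ = r * ((f.stalkMap x) ↑u * (f.stalkMap x) ↑u⁻¹) := by rw [hu', map_intCast]
    _ = r := by rw [← map_mul]; simp

lemma class_of_p {R : Type*} [CommRing R] (p : ℕ) (hp : p.Prime)
    (h : Nonempty (R ≃+* ZLocAtPrime p hp) ∨ ∃ n : ℕ, 0 < n ∧ Nonempty (R ≃+* ZMod (p ^ n)))
    (q : ℕ) (hq : q.Prime) : IsUnit (((q : ℤ) : R)) ↔ q ≠ p := by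
  rcases h with ⟨⟨e⟩⟩ | ⟨n, hn, ⟨e⟩⟩
  · rw [isUnit_intCast_of_equiv e]; exact unit_iff_loc p hp q hq
  · rw [isUnit_intCast_of_equiv e]; exact unit_iff_zmod p n q hp hn hq

/-- Let `S` be a scheme such that: (i) every stalk of `S` is isomorphic to `ℚ`, to `ℤ_(p)`
for some prime `p`, or to `ℤ/pⁿℤ` for some prime `p` and positive integer `n`; (ii) at most
one point of `S` has stalk isomorphic to `ℚ`; (iii) for every prime `p`, at most one point
of `S` has stalk isomorphic to `ℤ_(p)` or to `ℤ/pⁿℤ` for some positive `n`.  Then `S` is a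
subterminal object in the category of schemes. -/
theorem isSubterminal_of_stalk_conditions (S : Scheme)
    (h1 : ∀ x : S,
      Nonempty ((S.presheaf.stalk x : CommRingCat) ≃+* ℚ) ∨
      (∃ (p : ℕ) (hp : p.Prime),
        Nonempty ((S.presheaf.stalk x : CommRingCat) ≃+* ZLocAtPrime p hp)) ∨
      (∃ (p n : ℕ), p.Prime ∧ 0 < n ∧
        Nonempty ((S.presheaf.stalk x : CommRingCat) ≃+* ZMod (p ^ n))))
    (h2 : ∀ x y : S,
      Nonempty ((S.presheaf.stalk x : CommRingCat) ≃+* ℚ) →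
      Nonempty ((S.presheaf.stalk y : CommRingCat) ≃+* ℚ) → x = y)
    (h3 : ∀ (p : ℕ) (hp : p.Prime) (x y : S),
      (Nonempty ((S.presheaf.stalk x : CommRingCat) ≃+* ZLocAtPrime p hp) ∨
        ∃ n : ℕ, 0 < n ∧ Nonempty ((S.presheaf.stalk x : CommRingCat) ≃+* ZMod (p ^ n))) →
      (Nonempty ((S.presheaf.stalk y : CommRingCat) ≃+* ZLocAtPrime p hp) ∨
        ∃ n : ℕ, 0 < n ∧ Nonempty ((S.presheaf.stalk y : CommRingCat) ≃+* ZMod (p ^ n))) →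
      x = y) :
    IsSubterminal S := by
  -- reshape h1
  have hclass : ∀ z : S,
      Nonempty ((S.presheaf.stalk z : CommRingCat) ≃+* ℚ) ∨
      ∃ (p : ℕ) (hp : p.Prime),
        (Nonempty ((S.presheaf.stalk z : CommRingCat) ≃+* ZLocAtPrime p hp) ∨
          ∃ n : ℕ, 0 < n ∧ Nonempty ((S.presheaf.stalk z : CommRingCat) ≃+* ZMod (p ^ n))) := by
    intro z
    rcases h1 z with h | ⟨p, hp, h⟩ | ⟨p, n, hp, hn, h⟩
    · exact Or.inl h
    · exact Or.inr ⟨p, hp, Or.inl h⟩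
    · exact Or.inr ⟨p, hp, Or.inr ⟨n, hn, h⟩⟩
  have hfrac : ∀ z : S, IntFrac (S.presheaf.stalk z) := by
    intro z
    rcases h1 z with h | ⟨p, hp, h⟩ | ⟨p, n, hp, hn, h⟩
    · exact intFrac_of_equiv h.some intFrac_rat
    · exact intFrac_of_equiv h.some (intFrac_loc p hp)
    · exact intFrac_of_equiv h.some (intFrac_zmod _)
  -- injectivity on points of any morphism out of S
  have hinj : ∀ {Y : Scheme} (f : S ⟶ Y), Function.Injective f.base := by
    intro Y f x y hxy
    have key : ∀ n : ℤ, IsUnit ((n : S.presheaf.stalk x)) ↔ IsUnit ((n : S.presheaf.stalk y)) := by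
      intro n
      rw [isUnit_stalk_transfer f x n, isUnit_stalk_transfer f y n, hxy]
    rcases hclass x with hx | ⟨p, hp, hx⟩
    · rcases hclass y with hy | ⟨q, hq, hy⟩
      · exact h2 x y hx hy
      · exfalso
        obtain ⟨e⟩ := hx
        have hux : IsUnit ((q : ℤ) : S.presheaf.stalk x) :=
          (isUnit_intCast_of_equiv e _).mpr (unit_rat q hq)
        exact (class_of_p q hq hy q hq).mp ((key q).mp hux) rfl
    · rcases hclass y with hy | ⟨q, hq, hy⟩
      · exfalso
        obtain ⟨e⟩ := hy
        have huy : IsUnit ((p : ℤ) : S.presheaf.stalk y) :=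
          (isUnit_intCast_of_equiv e _).mpr (unit_rat p hp)
        exact (class_of_p p hp hx p hp).mp ((key p).mpr huy) rfl
      · have hpq : p = q := by
          by_contra hne
          have : IsUnit ((p : ℤ) : S.presheaf.stalk y) :=
            (class_of_p q hq hy p hp).mpr hne
          exact (class_of_p p hp hx p hp).mp ((key p).mpr this) rfl
        subst hpq
        exact h3 p hp x y hx hy
  -- the morphism to the terminal object is mono
  haveI : Mono (Limits.terminal.from S) := by
    refine (Scheme.forgetToLocallyRingedSpace ⋙
      LocallyRingedSpace.forgetToSheafedSpace).mono_of_mono_map ?_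
    apply SheafedSpace.mono_of_base_injective_of_stalk_epi
    · exact hinj (Limits.terminal.from S)
    · exact fun x ↦ ConcreteCategory.epi_of_surjective _
        (stalk_surj (Limits.terminal.from S) x (hfrac x))
  exact isSubterminal_of_mono_terminal_from
end

section
/- Let S be a subterminal scheme, and let U and V be affine open subsets of S each of which contains a point whose stalk is isomorphic, as a commutative ring, to ℚ. Then the symmetric difference (U \ V) ∪ (V \ U) of the underlying point sets of U and V is finite. -/
open AlgebraicGeometry CategoryTheory TensorProduct Opposite

noncomputable section SymmDiffProofAux

universe v u

/-- Two fields that are algebras over a common field embed into a common field. -/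
lemma exists_common_field_of_algebra (F : Type v) (K L : Type u) [Field F] [Field K] [Field L]
    [Algebra F K] [Algebra F L] :
    ∃ (M : Type u) (_ : Field M), Nonempty ((K →+* M) × (L →+* M)) := by
  have : Nontrivial (K ⊗[F] L) := Module.FaithfullyFlat.lTensor_nontrivial (R := F) (M := K) L
  obtain ⟨m, hm⟩ := Ideal.exists_maximal (K ⊗[F] L)
  haveI := hm
  exact ⟨(K ⊗[F] L) ⧸ m, Ideal.Quotient.field m,
    ⟨⟨(Ideal.Quotient.mk m).comp Algebra.TensorProduct.includeLeftRingHom,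
      (Ideal.Quotient.mk m).comp Algebra.TensorProduct.includeRight.toRingHom⟩⟩⟩

/-- Two fields with the same characteristic embed into a common field. -/
lemma exists_common_field (K L : Type u) [Field K] [Field L]
    (h : ringChar K = ringChar L) :
    ∃ (M : Type u) (_ : Field M), Nonempty ((K →+* M) × (L →+* M)) := by
  by_cases h0 : ringChar K = 0
  · haveI : CharP K 0 := h0 ▸ ringChar.charP K
    haveI : CharP L 0 := (h ▸ h0 : ringChar L = 0) ▸ ringChar.charP L
    haveI : CharZero K := CharP.charP_to_charZero K
    haveI : CharZero L := CharP.charP_to_charZero L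
    exact exists_common_field_of_algebra ℚ K L
  · have hp : (ringChar K).Prime := (CharP.char_is_prime_or_zero K (ringChar K)).resolve_right h0
    haveI : Fact (ringChar K).Prime := ⟨hp⟩
    haveI : CharP L (ringChar K) := h ▸ ringChar.charP L
    letI : Algebra (ZMod (ringChar K)) K := ZMod.algebra _ _
    letI : Algebra (ZMod (ringChar K)) L := ZMod.algebra _ _
    exact exists_common_field_of_algebra (ZMod (ringChar K)) K L

/-- A local ring in which all positive naturals are invertible has residue characteristic zero. -/
lemma ringChar_residueField_eq_zero (R : Type u) [CommRing R] [IsLocalRing R]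
    (h : ∀ n : ℕ, 0 < n → IsUnit ((n : ℕ) : R)) :
    ringChar (IsLocalRing.ResidueField R) = 0 := by
  by_contra hp
  have h0 : ((ringChar (IsLocalRing.ResidueField R) : ℕ) : IsLocalRing.ResidueField R) = 0 :=
    ringChar.Nat.cast_ringChar
  have hu := (h _ (Nat.pos_of_ne_zero hp)).map (IsLocalRing.residue R)
  rw [map_natCast] at hu
  rw [h0] at hu
  exact not_isUnit_zero hu

lemma ringChar_residueField_eq_zero' (S : Scheme.{u}) (x : S)
    (h : ∀ n : ℕ, 0 < n → IsUnit ((n : ℕ) : S.presheaf.stalk x)) :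
    ringChar (S.residueField x) = 0 :=
  ringChar_residueField_eq_zero _ h

lemma qunits_map {X Y : Scheme.{u}} (g : X ⟶ Y) (x : X)
    (h : ∀ n : ℕ, 0 < n → IsUnit ((n : ℕ) : X.presheaf.stalk x)) :
    ∀ n : ℕ, 0 < n → IsUnit ((n : ℕ) : Y.presheaf.stalk (g.base x)) := by
  intro n hn
  have h1 : IsUnit ((g.stalkMap x) ((n : ℕ) : Y.presheaf.stalk (g.base x))) := by
    rw [map_natCast]; exact h n hn
  exact isUnit_of_map_unit _ _ h1

/-- In a subterminal scheme, points are determined by residue characteristic. -/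
lemma eq_of_ringChar_eq {S : Scheme.{u}} (hS : IsSubterminal S) {s t : S}
    (h : ringChar (S.residueField s) = ringChar (S.residueField t)) : s = t := by
  obtain ⟨M, _, ⟨f, g⟩⟩ := exists_common_field (S.residueField s) (S.residueField t) h
  let pt : PrimeSpectrum M := ⟨⊥, Ideal.bot_prime⟩
  let g₁ : Spec (CommRingCat.of M) ⟶ S :=
    Spec.map (R := S.residueField s) (CommRingCat.ofHom f) ≫ S.fromSpecResidueField s
  let g₂ : Spec (CommRingCat.of M) ⟶ S :=
    Spec.map (R := S.residueField t) (CommRingCat.ofHom g) ≫ S.fromSpecResidueField t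
  have e : g₁.base pt = g₂.base pt := by rw [hS g₁ g₂]
  have e' : (S.fromSpecResidueField s) ((Spec.map (R := S.residueField s) (CommRingCat.ofHom f)) pt) =
      (S.fromSpecResidueField t) ((Spec.map (R := S.residueField t) (CommRingCat.ofHom g)) pt) := e
  rwa [Scheme.fromSpecResidueField_apply, Scheme.fromSpecResidueField_apply] at e'

lemma diff_finite {S : Scheme.{u}} (hS : IsSubterminal S) {U V : S.Opens}
    (hU : IsAffineOpen U) {x : S} (hxU : x ∈ U) (hxV : x ∈ V)
    (hQ : ∀ n : ℕ, 0 < n → IsUnit ((n : ℕ) : S.presheaf.stalk x)) :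
    Set.Finite ((U : Set S) \ (V : Set S)) := by
  obtain ⟨f, hfV, hxf⟩ := hU.exists_basicOpen_le (V := U ⊓ V) ⟨x, hxU, hxV⟩ hxU
  have hN : ∃ n : ℕ, 0 < n ∧ ((n : ℕ) : Γ(S, U)) ∈ Ideal.span {f} := by
    by_contra hcon
    push_neg at hcon
    set B := Γ(S, U) ⧸ Ideal.span {f} with hB
    let T : Submonoid B :=
      { carrier := {b | ∃ n : ℕ, 0 < n ∧ ((n : ℕ) : B) = b}
        one_mem' := ⟨1, Nat.one_pos, Nat.cast_one⟩
        mul_mem' := by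
          rintro a b ⟨n, hn, rfl⟩ ⟨m, hm, rfl⟩
          exact ⟨n * m, Nat.mul_pos hn hm, Nat.cast_mul n m⟩ }
    have h0T : (0 : B) ∉ T := by
      rintro ⟨n, hn, hn0⟩
      refine hcon n hn ?_
      have : (Ideal.Quotient.mk (Ideal.span {f})) ((n : ℕ) : Γ(S, U)) = 0 := by
        rw [map_natCast]; exact hn0
      rwa [Ideal.Quotient.eq_zero_iff_mem] at this
    haveI : Nontrivial (Localization T) := OreLocalization.nontrivial_iff.mpr h0T
    obtain ⟨m, hm⟩ := Ideal.exists_maximal (Localization T)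
    haveI := hm
    let ρ : Γ(S, U) →+* Localization T :=
      (algebraMap B (Localization T)).comp (Ideal.Quotient.mk (Ideal.span {f}))
    have hρf : ρ f = 0 := by
      have h1 : (Ideal.Quotient.mk (Ideal.span {f})) f = 0 :=
        Ideal.Quotient.eq_zero_iff_mem.mpr (Ideal.mem_span_singleton_self f)
      simp [ρ, RingHom.comp_apply, h1]
    have hKQ : ∀ n : ℕ, 0 < n → IsUnit ((n : ℕ) : Localization T) := by
      intro n hn
      have := IsLocalization.map_units (M := T) (Localization T) ⟨((n : ℕ) : B), ⟨n, hn, rfl⟩⟩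
      rwa [map_natCast] at this
    let pt : PrimeSpectrum (Localization T) := ⟨m, hm.isPrime⟩
    let gK : Spec (CommRingCat.of (Localization T)) ⟶ S :=
      Spec.map (R := Γ(S, U)) (CommRingCat.ofHom ρ) ≫ hU.fromSpec
    have hQK : ∀ n : ℕ, 0 < n →
        IsUnit ((n : ℕ) : (Spec (CommRingCat.of (Localization T))).presheaf.stalk pt) := by
      intro n hn
      have h2 : IsUnit ((n : ℕ) : Γ(Spec (CommRingCat.of (Localization T)), ⊤)) := by
        have := (hKQ n hn).map (Scheme.ΓSpecIso (CommRingCat.of (Localization T))).inv.hom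
        rwa [map_natCast] at this
      have := h2.map ((Spec (CommRingCat.of (Localization T))).presheaf.germ ⊤ pt trivial).hom
      rwa [map_natCast] at this
    have hs'x : gK.base pt = x :=
      eq_of_ringChar_eq hS
        ((ringChar_residueField_eq_zero' S _ (qunits_map gK pt hQK)).trans
          (ringChar_residueField_eq_zero' S x hQ).symm)
    have hnotmem : gK.base pt ∉ S.basicOpen f := by
      intro hmem'
      have h3 : (Spec.map (R := Γ(S, U)) (CommRingCat.ofHom ρ)).base pt ∈
          hU.fromSpec ⁻¹ᵁ S.basicOpen f := hmem'
      rw [hU.fromSpec_preimage_basicOpen] at h3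
      refine h3 ?_
      show ρ f ∈ pt.asIdeal
      rw [hρf]
      exact Ideal.zero_mem _
    exact hnotmem (hs'x ▸ hxf)
  obtain ⟨N, hNpos, hNmem⟩ := hN
  have main : Set.Finite ((U : Set S) \ (S.basicOpen f : Set S)) := by
    have hinj : Set.InjOn (fun s => ringChar (S.residueField s))
        ((U : Set S) \ (S.basicOpen f : Set S)) := fun a _ b _ h => eq_of_ringChar_eq hS h
    refine Set.Finite.of_finite_image ((Set.finite_Iic N).subset ?_) hinj
    rintro _ ⟨s, ⟨hsU, hsf⟩, rfl⟩
    have hev : S.evaluation U s hsU f = 0 :=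
      (S.evaluation_eq_zero_iff_notMem_basicOpen s hsU f).mpr hsf
    obtain ⟨a, ha⟩ := Ideal.mem_span_singleton'.mp hNmem
    have hcast : ((N : ℕ) : S.residueField s) = 0 := by
      have := congrArg (S.evaluation U s hsU) ha
      rwa [map_mul, hev, mul_zero, map_natCast, eq_comm] at this
    haveI : CharP (S.residueField s) (ringChar (S.residueField s)) := ringChar.charP _
    have hdvd : ringChar (S.residueField s) ∣ N :=
      (CharP.cast_eq_zero_iff (S.residueField s) (ringChar (S.residueField s)) N).mp hcast
    exact Nat.le_of_dvd hNpos hdvd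
  exact main.subset (Set.diff_subset_diff_right (fun y hy => (hfV hy).2))

/-- Let `S` be a subterminal scheme, and let `U` and `V` be affine open subsets of `S`, each
containing a point whose stalk is isomorphic to `ℚ`.  Then the symmetric difference of the
underlying point sets of `U` and `V` is finite. -/
theorem symmDiff_finite_of_affine_opens (S : Scheme) (hS : IsSubterminal S)
    (U V : S.Opens) (hU : IsAffineOpen U) (hV : IsAffineOpen V)
    (hUQ : ∃ x ∈ U, Nonempty ((S.presheaf.stalk x : CommRingCat) ≃+* ℚ))
    (hVQ : ∃ x ∈ V, Nonempty ((S.presheaf.stalk x : CommRingCat) ≃+* ℚ)) :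
    Set.Finite (((U : Set S) \ (V : Set S)) ∪ ((V : Set S) \ (U : Set S))) := by
  obtain ⟨xU, hxU, ⟨eU⟩⟩ := hUQ
  obtain ⟨xV, hxV, ⟨eV⟩⟩ := hVQ
  have hQU : ∀ n : ℕ, 0 < n → IsUnit ((n : ℕ) : S.presheaf.stalk xU) := by
    intro n hn
    have h1 : IsUnit ((n : ℕ) : ℚ) := isUnit_iff_ne_zero.mpr (Nat.cast_ne_zero.mpr hn.ne')
    have := h1.map eU.symm.toRingHom
    rwa [map_natCast] at this
  have hQV : ∀ n : ℕ, 0 < n → IsUnit ((n : ℕ) : S.presheaf.stalk xV) := by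
    intro n hn
    have h1 : IsUnit ((n : ℕ) : ℚ) := isUnit_iff_ne_zero.mpr (Nat.cast_ne_zero.mpr hn.ne')
    have := h1.map eV.symm.toRingHom
    rwa [map_natCast] at this
  have hxUV : xU = xV :=
    eq_of_ringChar_eq hS
      ((ringChar_residueField_eq_zero' S xU hQU).trans
        (ringChar_residueField_eq_zero' S xV hQV).symm)
  apply Set.Finite.union
  · exact diff_finite hS hU hxU (hxUV ▸ hxV) hQU
  · exact diff_finite hS hV hxV (hxUV ▸ hxU) hQV

end SymmDiffProofAux
end
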